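/- Let A ⊆ ℝ³ be a nonempty compact semi-algebraic set whose boundary ∂A is connected and nonempty, and let f : A → ℝ be a regular function (continuous and, in each coordinate, strictly monotone or constant). Then the image f(∂A) equals the closed interval [min_A f, max_A f]. -/

import Mathlib

open Set

def IsSemialgebraic {n : ℕ} (A : Set (Fin n → ℝ)) : Prop :=
  ∃ (N : ℕ) (E I : Fin N → Finset (MvPolynomial (Fin n) ℝ)),
    A = ⋃ m, {x | (∀ p ∈ E m, MvPolynomial.eval x p = 0) ∧
                  (∀ p ∈ I m, 0 < MvPolynomial.eval x p)}

/-- A function is regular on `A` if it is continuous on `A` and, in each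
coordinate (with the other coordinates fixed), strictly increasing, strictly
decreasing, or constant. -/
def RegularOn {n : ℕ} (f : (Fin n → ℝ) → ℝ) (A : Set (Fin n → ℝ)) : Prop :=
  ContinuousOn f A ∧
  ∀ i : Fin n,
    (∀ x ∈ A, ∀ y ∈ A, (∀ j, j ≠ i → x j = y j) → x i < y i → f x < f y) ∨
    (∀ x ∈ A, ∀ y ∈ A, (∀ j, j ≠ i → x j = y j) → x i < y i → f y < f x) ∨
    (∀ x ∈ A, ∀ y ∈ A, (∀ j, j ≠ i → x j = y j) → f x = f y)

lemma near_notA (A : Set (Fin 3 → ℝ)) (x₀ : Fin 3 → ℝ) (s : ℝ) (hs : s = 1 ∨ s = -1)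
    (h : ∀ t : ℝ, 0 < t → Function.update x₀ 0 (x₀ 0 + s * t) ∉ A) :
    x₀ ∉ interior A := by
  have hcl : x₀ ∈ closure Aᶜ := by
    rw [Metric.mem_closure_iff]
    intro ε hε
    refine ⟨Function.update x₀ 0 (x₀ 0 + s * (ε/2)), h _ (by linarith), ?_⟩
    have hd : dist x₀ (Function.update x₀ 0 (x₀ 0 + s * (ε/2))) ≤ ε/2 := by
      rw [dist_pi_le_iff (by linarith)]
      intro i
      by_cases hi : i = 0
      · subst hi
        rw [Function.update_self, Real.dist_eq,
          show x₀ 0 - (x₀ 0 + s * (ε/2)) = -(s * (ε/2)) by ring, abs_neg, abs_mul]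
        rcases hs with h1 | h1 <;> subst h1 <;>
          rw [abs_of_nonneg (by linarith : (0:ℝ) ≤ ε/2)] <;> simp
      · rw [Function.update_of_ne hi, dist_self]; linarith
    linarith
  rw [closure_compl] at hcl
  exact hcl

lemma aux_max (A : Set (Fin 3 → ℝ)) (f : (Fin 3 → ℝ) → ℝ)
    (hcpt : IsCompact A) (hf : RegularOn f A)
    (x₀ : Fin 3 → ℝ) (hx₀ : x₀ ∈ A) (hmax : ∀ y ∈ A, f y ≤ f x₀) :
    ∃ p ∈ frontier A, f p = f x₀ := by
  have hAc : IsClosed A := hcpt.isClosed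
  rcases hf.2 0 with hinc | hdec | hconst
  · refine ⟨x₀, ⟨subset_closure hx₀, ?_⟩, rfl⟩
    apply near_notA A x₀ 1 (Or.inl rfl)
    intro t ht hmem
    have := hinc x₀ hx₀ _ hmem (fun j hj => (Function.update_of_ne hj _ _).symm)
      (by rw [Function.update_self]; linarith)
    exact absurd (hmax _ hmem) (not_le.mpr this)
  · refine ⟨x₀, ⟨subset_closure hx₀, ?_⟩, rfl⟩
    apply near_notA A x₀ (-1) (Or.inr rfl)
    intro t ht hmem
    have := hdec _ hmem x₀ hx₀ (fun j hj => Function.update_of_ne hj _ _)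
      (by rw [Function.update_self]; linarith)
    exact absurd (hmax _ hmem) (not_le.mpr this)
  · set S : Set ℝ := {t | Function.update x₀ 0 t ∈ A} with hS
    have hSne : (x₀ 0) ∈ S := by simp [hS, Function.update_eq_self, hx₀]
    have hcont : Continuous fun t : ℝ => Function.update x₀ 0 t := by
      apply continuous_pi; intro i
      by_cases hi : i = 0
      · subst hi; simpa [Function.update_self] using continuous_id'
      · simpa [Function.update_of_ne hi] using continuous_const
    have hScl : IsClosed S := hAc.preimage hcont
    have hSbdd : BddAbove S := by
      obtain ⟨C, hC⟩ := hcpt.isBounded.exists_norm_le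
      refine ⟨C, fun t ht => ?_⟩
      have h1 : ‖(Function.update x₀ 0 t) 0‖ ≤ ‖Function.update x₀ 0 t‖ :=
        norm_le_pi_norm _ 0
      rw [Function.update_self] at h1
      calc t ≤ |t| := le_abs_self t
        _ ≤ C := le_trans h1 (hC _ ht)
    set t₀ := sSup S with ht₀
    have ht₀S : t₀ ∈ S := hScl.csSup_mem ⟨_, hSne⟩ hSbdd
    set p := Function.update x₀ 0 t₀ with hp
    have hpA : p ∈ A := ht₀S
    refine ⟨p, ⟨subset_closure hpA, ?_⟩, ?_⟩
    · apply near_notA A p 1 (Or.inl rfl)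
      intro t ht hmem
      have hp0 : p 0 = t₀ := Function.update_self _ _ _
      have heq : Function.update p 0 (p 0 + 1 * t) = Function.update x₀ 0 (t₀ + t) := by
        rw [hp0, hp, Function.update_idem]; ring_nf
      rw [heq] at hmem
      have : t₀ + t ≤ t₀ := le_csSup hSbdd hmem
      linarith
    · exact (hconst x₀ hx₀ p hpA (fun j hj => (Function.update_of_ne hj _ _).symm)).symm

lemma regular_neg (A : Set (Fin 3 → ℝ)) (f : (Fin 3 → ℝ) → ℝ) (hf : RegularOn f A) :
    RegularOn (fun x => -(f x)) A := by
  refine ⟨fun x hx => (hf.1 x hx).neg, fun i => ?_⟩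
  rcases hf.2 i with h | h | h
  · exact Or.inr (Or.inl (fun x hx y hy hj hi => by simpa using h x hx y hy hj hi))
  · exact Or.inl (fun x hx y hy hj hi => by simpa using h x hx y hy hj hi)
  · exact Or.inr (Or.inr (fun x hx y hy hj => by simpa using h x hx y hy hj))


theorem stmt3 (A : Set (Fin 3 → ℝ)) (f : (Fin 3 → ℝ) → ℝ)
    (hne : A.Nonempty) (hcpt : IsCompact A) (hsa : IsSemialgebraic A)
    (hbd : IsConnected (frontier A)) (hf : RegularOn f A) :
    f '' frontier A = Set.Icc (sInf (f '' A)) (sSup (f '' A)) := by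
  have hAc : IsClosed A := hcpt.isClosed
  have hfr_sub : frontier A ⊆ A := hAc.frontier_subset
  have hK : IsCompact (f '' A) := IsCompact.image_of_continuousOn (f := f) hcpt hf.1
  have hKne : (f '' A).Nonempty := hne.image f
  have hbdd : BddAbove (f '' A) := hK.bddAbove
  have hbddb : BddBelow (f '' A) := hK.bddBelow
  obtain ⟨xM, hxMA, hMval⟩ := hK.sSup_mem hKne
  have hxMmax : ∀ y ∈ A, f y ≤ f xM := fun y hy => hMval ▸ le_csSup hbdd ⟨y, hy, rfl⟩
  obtain ⟨p, hpfr, hpval⟩ := aux_max A f hcpt hf xM hxMA hxMmax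
  obtain ⟨xm, hxmA, hmval⟩ := hK.sInf_mem hKne
  have hxmmin : ∀ y ∈ A, f xm ≤ f y := fun y hy => hmval ▸ csInf_le hbddb ⟨y, hy, rfl⟩
  obtain ⟨q, hqfr, hqval⟩ := aux_max A (fun x => -(f x)) hcpt (regular_neg A f hf) xm hxmA
    (fun y hy => neg_le_neg (hxmmin y hy))
  have hqval' : f q = f xm := by simpa using hqval
  apply Set.Subset.antisymm
  · rintro v ⟨z, hz, rfl⟩
    have hzA : z ∈ A := hfr_sub hz
    exact ⟨csInf_le hbddb ⟨z, hzA, rfl⟩, le_csSup hbdd ⟨z, hzA, rfl⟩⟩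
  · have hpre : IsPreconnected (f '' frontier A) :=
      hbd.isPreconnected.image f (hf.1.mono hfr_sub)
    apply hpre.Icc_subset
    · rw [← hmval]; exact ⟨q, hqfr, hqval'⟩
    · rw [← hMval]; exact ⟨p, hpfr, hpval⟩
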